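/- For every integer d ≥ 3 and every sequence u = (u_j)_{j∈ℕ} of real numbers with u_j ∈ [1,2] for all j, one has Σ_{j∈ℕ} u_j²·d^{-(j+1)} − (Σ_{j∈ℕ} u_j·d^{-(j+1)})² ≥ (d−2)/(d−1)². -/

import Mathlib

/-- For every integer `d ≥ 3` and every sequence `u` with `u_j ∈ [1,2]` for all `j`,
`Σ_j u_j²·d^{-(j+1)} − (Σ_j u_j·d^{-(j+1)})² ≥ (d−2)/(d−1)²`. -/
theorem variance_lower_bound (d : ℕ) (hd : 3 ≤ d)
    (u : ℕ → ℝ) (hu : ∀ j, u j ∈ Set.Icc (1 : ℝ) 2) :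
    ((d : ℝ) - 2) / ((d : ℝ) - 1) ^ 2
      ≤ (∑' j : ℕ, (u j) ^ 2 * (d : ℝ) ^ (-(j : ℤ) - 1))
        - (∑' j : ℕ, u j * (d : ℝ) ^ (-(j : ℤ) - 1)) ^ 2 := by
  have hd3 : (3 : ℝ) ≤ (d : ℝ) := by exact_mod_cast hd
  have hdpos : (0 : ℝ) < d := by linarith
  set r : ℝ := (d : ℝ)⁻¹ with hr
  have hr0 : 0 < r := inv_pos.mpr hdpos
  have hr1 : r < 1 := by
    rw [hr, inv_lt_one_iff₀]; right; linarith
  set p : ℕ → ℝ := fun j => r ^ (j + 1) with hpdef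
  have hzp : ∀ j : ℕ, (d : ℝ) ^ (-(j : ℤ) - 1) = p j := by
    intro j
    rw [show -(j : ℤ) - 1 = -((j + 1 : ℕ) : ℤ) by push_cast; ring, zpow_neg, zpow_natCast,
      ← inv_pow]
  have hppos : ∀ j, 0 < p j := fun j => pow_pos hr0 _
  have hpsum : Summable p := by
    have := (summable_geometric_of_lt_one hr0.le hr1).mul_left r
    apply this.congr
    intro j
    simp [hpdef, pow_succ, mul_comm]
  set t : ℕ → ℝ := fun j => u j - 1 with htdef
  have ht0 : ∀ j, 0 ≤ t j := fun j => by have := (hu j).1; simp [htdef]; linarith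
  have ht1 : ∀ j, t j ≤ 1 := fun j => by have := (hu j).2; simp [htdef]; linarith
  have hsum1 : Summable (fun j => t j * p j) := by
    apply Summable.of_nonneg_of_le (fun j => mul_nonneg (ht0 j) (hppos j).le)
      (fun j => ?_) hpsum
    nlinarith [(hppos j).le, ht0 j, ht1 j]
  have hsum2 : Summable (fun j => t j ^ 2 * p j) := by
    apply Summable.of_nonneg_of_le (fun j => mul_nonneg (sq_nonneg _) (hppos j).le)
      (fun j => ?_) hpsum
    nlinarith [(hppos j).le, ht0 j, ht1 j,
      mul_nonneg (mul_nonneg (sub_nonneg.2 (ht1 j)) (by linarith [ht0 j] : (0:ℝ) ≤ 1 + t j)) (hppos j).le]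
  set c : ℝ := ∑' j, p j with hcdef
  set T1 : ℝ := ∑' j, t j * p j with hT1def
  set T2 : ℝ := ∑' j, t j ^ 2 * p j with hT2def
  have hc : c = 1 / ((d : ℝ) - 1) := by
    have h1 : c = r * (1 - r)⁻¹ := by
      rw [hcdef, ← tsum_geometric_of_lt_one hr0.le hr1, ← tsum_mul_left]
      congr 1; ext j; simp [hpdef, pow_succ, mul_comm]
    rw [h1]
    have hd0 : (d : ℝ) ≠ 0 := ne_of_gt hdpos
    have hd1 : (d : ℝ) - 1 ≠ 0 := by intro h; nlinarith
    have h1r : 1 - r ≠ 0 := by intro h; nlinarith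
    field_simp [hr]
    rw [hr, inv_mul_eq_div, sub_div, div_self hd0, one_div]
  have hT1nn : 0 ≤ T1 := tsum_nonneg fun j => mul_nonneg (ht0 j) (hppos j).le
  have hc0 : (0 : ℝ) < c := by
    rw [hc]
    have : (0:ℝ) < (d:ℝ) - 1 := by linarith
    positivity
  have hc1 : c ≤ 1 / 2 := by
    rw [hc]
    rw [div_le_div_iff₀ (by linarith) (by norm_num)]
    linarith
  -- Cauchy–Schwarz via pointwise inequality with b = T1 / c
  set b : ℝ := T1 / c with hbdef
  have hkey : T1 ^ 2 ≤ T2 * c := by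
    have hpt : ∀ j, (2 * b * t j - b ^ 2) * p j ≤ t j ^ 2 * p j := by
      intro j
      have := sq_nonneg (t j - b)
      nlinarith [(hppos j).le]
    have hsumL : Summable (fun j => (2 * b * t j - b ^ 2) * p j) := by
      have : (fun j => (2 * b * t j - b ^ 2) * p j)
          = fun j => (2 * b) * (t j * p j) - b ^ 2 * p j := by ext j; ring
      rw [this]
      exact (hsum1.mul_left _).sub (hpsum.mul_left _)
    have hle := Summable.tsum_le_tsum hpt hsumL hsum2
    have hL : (∑' j, (2 * b * t j - b ^ 2) * p j) = 2 * b * T1 - b ^ 2 * c := by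
      have : (fun j => (2 * b * t j - b ^ 2) * p j)
          = fun j => (2 * b) * (t j * p j) - b ^ 2 * p j := by ext j; ring
      rw [this, Summable.tsum_sub (hsum1.mul_left _) (hpsum.mul_left _), tsum_mul_left, tsum_mul_left]
    rw [hL] at hle
    have hb : b * c = T1 := by rw [hbdef, div_mul_cancel₀ _ hc0.ne']
    nlinarith [hle, hc0]
  have hS1 : (∑' j : ℕ, u j * (d : ℝ) ^ (-(j : ℤ) - 1)) = c + T1 := by
    have : (fun j : ℕ => u j * (d : ℝ) ^ (-(j : ℤ) - 1))
        = fun j => p j + t j * p j := by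
      ext j; rw [hzp j]; simp [htdef]; ring
    rw [this, Summable.tsum_add hpsum hsum1]
  have hS2 : (∑' j : ℕ, (u j) ^ 2 * (d : ℝ) ^ (-(j : ℤ) - 1)) = c + (2 * T1 + T2) := by
    have : (fun j : ℕ => (u j) ^ 2 * (d : ℝ) ^ (-(j : ℤ) - 1))
        = fun j => p j + (2 * (t j * p j) + t j ^ 2 * p j) := by
      ext j; rw [hzp j]
      have : u j = t j + 1 := by simp [htdef]
      rw [this]; ring
    rw [this, Summable.tsum_add hpsum ((hsum1.mul_left 2).add hsum2),
      Summable.tsum_add (hsum1.mul_left 2) hsum2, tsum_mul_left]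
  rw [hS1, hS2]
  have hfinal : c * (1 - c) ≤ c + (2 * T1 + T2) - (c + T1) ^ 2 := by
    nlinarith [hkey, hT1nn, hc0, hc1, mul_nonneg hT1nn hc0.le, sq_nonneg T1,
      mul_nonneg (mul_nonneg hT1nn hT1nn) hc0.le]
  have heq : ((d : ℝ) - 2) / ((d : ℝ) - 1) ^ 2 = c * (1 - c) := by
    rw [hc]
    have hd1 : (d : ℝ) - 1 ≠ 0 := by intro h; nlinarith
    field_simp
    ring
  linarith [hfinal, heq.le]
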